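/- Let C be a hereditary abelian K-category with tilting object T, and let θ: A' → A'' and φ: B' → B'' be monomorphisms with A', A'', B', B'' ∈ add(T). Then the map κ from the space of pairs (f,g) ∈ Hom(A',B') × Hom(A'',B'') with gθ = φf to Hom(Coker θ, Coker φ), sending (f,g) to the induced map on cokernels, is a surjective K-linear map with kernel isomorphic to Hom(A'', B'); i.e. there is a short exact sequence of vector spaces 0 → Hom(A'',B') → {(f,g) : gθ = φf} → Hom(Coker θ, Coker φ) → 0. -/

import Mathlib

/-!
STATEMENT 13: Let `C` be a hereditary abelian `K`-category with tilting object `T`, and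
let `θ : A' ⟶ A''`, `φ : B' ⟶ B''` be monomorphisms with `A', A'', B', B'' ∈ add T`.
Then the map `κ` from `{(f,g) : gθ = φf}` to `Hom(Coker θ, Coker φ)` sending a pair to
the induced map on cokernels is surjective, with kernel the image of
`Hom(A'', B') → {(f,g)}`, `e ↦ (eθ, φe)`, which is injective; i.e. there is a short
exact sequence `0 → Hom(A'',B') → {(f,g) : gθ = φf} → Hom(Coker θ, Coker φ) → 0`.
-/

open CategoryTheory CategoryTheory.Limits Opposite

attribute [local instance] CategoryTheory.Abelian.hasFiniteBiproducts

noncomputable section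

universe v u

variable (K : Type*) [Field K]
variable {C : Type u} [Category.{v} C] [Abelian C] [Linear K C] [EnoughProjectives C]

/-- The first Ext space, as a `K`-module. -/
def ext1 (X Y : C) : ModuleCat K := ((Ext K C 1).obj (op X)).obj Y

/-- `X` is a quotient of a finite direct sum of copies of `T`. -/
def InFac (T X : C) : Prop :=
  ∃ (n : ℕ) (f : (⨁ fun _ : Fin n => T) ⟶ X), Epi f

/-- `X` is a direct summand of a finite direct sum of copies of `T`. -/
def InAdd (T X : C) : Prop :=
  ∃ (n : ℕ) (r : X ⟶ ⨁ fun _ : Fin n => T) (s : (⨁ fun _ : Fin n => T) ⟶ X),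
    r ≫ s = 𝟙 X

/-- `T` is a tilting object: `Fac T = {X | Ext¹(T,X) = 0}`. -/
def IsTilting (T : C) : Prop :=
  ∀ X : C, InFac T X ↔ IsZero (ext1 K T X)

set_option linter.unusedSectionVars false in
/-- A morphism that is killed by the cokernel projection of a mono factors
through the mono. -/
lemma factor_thru_mono' {X B' B'' : C} (φ : B' ⟶ B'') (hφ : Mono φ) (g : X ⟶ B'')
    (hg : g ≫ cokernel.π φ = 0) : ∃ e : X ⟶ B', e ≫ φ = g := by
  have h := Abelian.monoIsKernelOfCokernel (CokernelCofork.ofπ _ (cokernel.condition φ))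
    (cokernelIsCokernel φ)
  obtain ⟨l, hl⟩ := KernelFork.IsLimit.lift' h g hg
  exact ⟨l, hl⟩

set_option linter.unusedSectionVars false in
/-- Retracts of direct sums are quotients of direct sums. -/
lemma inFac_of_inAdd' {T X : C} (h : InAdd T X) : InFac T X := by
  obtain ⟨n, r, s, hrs⟩ := h
  have : IsSplitEpi s := ⟨⟨⟨r, hrs⟩⟩⟩
  exact ⟨n, s, inferInstance⟩

/-- If `Ext¹(X, B') = 0` then any morphism to the cokernel of a mono `φ : B' ⟶ B''`
lifts along `cokernel.π φ`. -/
lemma lift_of_ext1_zero' {X B' B'' : C} (hX : IsZero (ext1 K X B')) (φ : B' ⟶ B'')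
    (hφ : Mono φ) (u : X ⟶ cokernel φ) : ∃ g : X ⟶ B'', g ≫ cokernel.π φ = u := by
  set P := ProjectiveResolution.of X with hP
  set ε : P.complex.X 0 ⟶ X := P.π.f 0 with hε
  have hproj : Projective (P.complex.X 0) := inferInstance
  -- lift `ε ≫ u` through the epi `cokernel.π φ`
  set v : P.complex.X 0 ⟶ B'' := Projective.factorThru (ε ≫ u) (cokernel.π φ) with hv
  have hvπ : v ≫ cokernel.π φ = ε ≫ u := Projective.factorThru_comp _ _
  -- `d 1 0 ≫ v` factors through `φ`
  have h1 : (P.complex.d 1 0 ≫ v) ≫ cokernel.π φ = 0 := by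
    rw [Category.assoc, hvπ, ← Category.assoc]
    erw [P.complex_d_comp_π_f_zero]
    exact zero_comp
  obtain ⟨w, hw⟩ := factor_thru_mono' φ hφ _ h1
  -- `w` is a cocycle
  have hw2 : P.complex.d 2 1 ≫ w = 0 := by
    have : (P.complex.d 2 1 ≫ w) ≫ φ = 0 := by
      rw [Category.assoc, hw, ← Category.assoc, HomologicalComplex.d_comp_d, zero_comp]
    exact (cancel_mono φ).mp (by rw [this, zero_comp])
  -- the Hom cochain complex is exact at 1
  set Kc := P.complex.linearYonedaObj K B' with hKc
  have hiso : IsZero (Kc.homology 1) := hX.of_iso (P.isoExt 1 B').symm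
  have hexact : (Kc.sc' 0 1 2).Exact := by
    rw [← HomologicalComplex.exactAt_iff' Kc 0 1 2 (by simp) (by simp)]
    rw [HomologicalComplex.exactAt_iff_isZero_homology]
    exact hiso
  rw [ShortComplex.moduleCat_exact_iff] at hexact
  have hd12 : (Kc.sc' 0 1 2).g w = 0 := by
    show (Kc.d 1 2) w = 0
    rw [ChainComplex.linearYonedaObj_d]
    exact hw2
  obtain ⟨t₀, ht⟩ := hexact w hd12
  set t : P.complex.X 0 ⟶ B' := t₀ with htt
  have ht' : P.complex.d 1 0 ≫ t = w := by
    have : (Kc.d 0 1) t = w := ht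
    rwa [ChainComplex.linearYonedaObj_d] at this
  -- correct `v`
  set v' : P.complex.X 0 ⟶ B'' := v - t ≫ φ with hv'
  have hdv' : P.complex.d 1 0 ≫ v' = 0 := by
    rw [hv', Preadditive.comp_sub, ← hw, ← Category.assoc, ht', sub_self]
  -- factor through the cokernel `ε`
  obtain ⟨g₀, hg⟩ := CokernelCofork.IsColimit.desc' P.isColimitCokernelCofork v' hdv'
  set g : X ⟶ B'' := g₀ with hgg
  refine ⟨g, ?_⟩
  have : ε ≫ g ≫ cokernel.π φ = ε ≫ u := by
    rw [← Category.assoc]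
    have hg' : ε ≫ g = v' := hg
    rw [hg', hv', Preadditive.sub_comp, hvπ, Category.assoc, cokernel.condition,
      comp_zero, sub_zero]
  haveI hεepi : Epi ε := (inferInstance : Epi (P.π.f 0))
  exact (cancel_epi ε).mp this

theorem hom_coker_short_exact
    (hHomFin : ∀ X Y : C, FiniteDimensional K (X ⟶ Y))
    (hExtFin : ∀ X Y : C, FiniteDimensional K (ext1 K X Y))
    (hHereditary : ∀ (X Y : C) (n : ℕ), 2 ≤ n →
      IsZero (((Ext K C n).obj (op X)).obj Y))
    (T : C) (hT : IsTilting K T)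
    {A' A'' B' B'' : C} (θ : A' ⟶ A'') (φ : B' ⟶ B'')
    (hA' : InAdd T A') (hA'' : InAdd T A'') (hB' : InAdd T B') (hB'' : InAdd T B'')
    (hθ : Mono θ) (hφ : Mono φ) :
    ∃ κ : {fg : (A' ⟶ B') × (A'' ⟶ B'') // θ ≫ fg.2 = fg.1 ≫ φ} →
        (cokernel θ ⟶ cokernel φ),
      (∀ v, cokernel.π θ ≫ κ v = v.val.2 ≫ cokernel.π φ) ∧
      Function.Surjective κ ∧
      (∀ v, κ v = 0 ↔ ∃ e : A'' ⟶ B', v.val.1 = θ ≫ e ∧ v.val.2 = e ≫ φ) ∧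
      Function.Injective (fun e : A'' ⟶ B' =>
        (⟨(θ ≫ e, e ≫ φ), by rw [Category.assoc]⟩ :
          {fg : (A' ⟶ B') × (A'' ⟶ B'') // θ ≫ fg.2 = fg.1 ≫ φ})) := by
  have hcond : ∀ v : {fg : (A' ⟶ B') × (A'' ⟶ B'') // θ ≫ fg.2 = fg.1 ≫ φ},
      θ ≫ (v.val.2 ≫ cokernel.π φ) = 0 := by
    intro v
    rw [← Category.assoc, v.prop, Category.assoc, cokernel.condition, comp_zero]
  refine ⟨fun v => cokernel.desc θ (v.val.2 ≫ cokernel.π φ) (hcond v),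
    fun v => cokernel.π_desc _ _ _, ?_, ?_, ?_⟩
  · -- surjectivity
    intro h
    have hTB' : IsZero (ext1 K T B') := (hT B').mp (inFac_of_inAdd' hB')
    obtain ⟨n, r, s, hrs⟩ := hA''
    set u : A'' ⟶ cokernel φ := cokernel.π θ ≫ h with hu
    -- lift `s ≫ u` componentwise
    have hlift : ∀ i : Fin n, ∃ gi : T ⟶ B'',
        gi ≫ cokernel.π φ = biproduct.ι (fun _ : Fin n => T) i ≫ s ≫ u :=
      fun i => lift_of_ext1_zero' K hTB' φ hφ _
    choose gi hgi using hlift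
    set G : (⨁ fun _ : Fin n => T) ⟶ B'' := biproduct.desc gi with hG
    have hGπ : G ≫ cokernel.π φ = s ≫ u := by
      ext i
      rw [biproduct.ι_desc_assoc, hgi]
    set g : A'' ⟶ B'' := r ≫ G with hg
    have hgπ : g ≫ cokernel.π φ = u := by
      rw [hg, Category.assoc, hGπ, ← Category.assoc, hrs, Category.id_comp]
    have hθg : (θ ≫ g) ≫ cokernel.π φ = 0 := by
      rw [Category.assoc, hgπ, hu, ← Category.assoc, cokernel.condition, zero_comp]
    obtain ⟨f, hf⟩ := factor_thru_mono' φ hφ _ hθg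
    refine ⟨⟨(f, g), hf.symm⟩, ?_⟩
    show cokernel.desc θ (g ≫ cokernel.π φ) _ = h
    apply (cancel_epi (cokernel.π θ)).mp
    rw [cokernel.π_desc]
    exact hgπ
  · -- kernel characterization
    intro v
    constructor
    · intro h0
      have h0' : cokernel.desc θ (v.val.2 ≫ cokernel.π φ) (hcond v) = 0 := h0
      have hvg : v.val.2 ≫ cokernel.π φ = 0 := by
        rw [← cokernel.π_desc θ (v.val.2 ≫ cokernel.π φ) (hcond v), h0', comp_zero]
      obtain ⟨e, he⟩ := factor_thru_mono' φ hφ _ hvg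
      refine ⟨e, ?_, he.symm⟩
      apply (cancel_mono φ).mp
      rw [Category.assoc, he, ← v.prop]
    · rintro ⟨e, he1, he2⟩
      show cokernel.desc θ (v.val.2 ≫ cokernel.π φ) (hcond v) = 0
      apply (cancel_epi (cokernel.π θ)).mp
      rw [cokernel.π_desc, he2, Category.assoc, cokernel.condition, comp_zero, comp_zero]
  · -- injectivity
    intro e e' h
    have := congrArg (fun x => x.val.2) h
    simp only at this
    exact (cancel_mono φ).mp this

end
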